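/- Let G be a group with elements g₁,…,g₅ and integers t_{ijk} (1 ≤ i < j < k ≤ 5) satisfying the listed commutator relations. Then for every integer y, the conjugate g₁^{-y} g₃ g₁^{y} equals g₃ · g₄^{y t₁₃₄} · g₅^{y t₁₃₅ + s₂(y) t₁₃₄ t₁₄₅}. -/

import Mathlib

/-- `s₂(x) = x(x-1)/2` -/
def s2 (x : ℤ) : ℤ := x * (x - 1) / 2

lemma two_s2 (y : ℤ) : 2 * s2 y = y * (y - 1) := by
  obtain ⟨k, hk⟩ := Int.even_mul_succ_self (y - 1)
  have hk' : y * (y - 1) = 2 * k := by linear_combination hk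
  unfold s2
  rw [hk', Int.mul_ediv_cancel_left _ two_ne_zero]

lemma s2_succ (y : ℤ) : s2 (y + 1) = s2 y + y := by
  refine mul_left_cancel₀ (two_ne_zero : (2:ℤ) ≠ 0) ?_
  rw [two_s2]
  linear_combination (-1 : ℤ) * two_s2 y

lemma s2_pred (y : ℤ) : s2 (y - 1) = s2 y - (y - 1) := by
  refine mul_left_cancel₀ (two_ne_zero : (2:ℤ) ≠ 0) ?_
  rw [two_s2]
  linear_combination (-1 : ℤ) * two_s2 y

/-- Conjugation formula `g₃^{g₁^y} = g₃ g₄^{y t₁₃₄} g₅^{y t₁₃₅ + s₂(y) t₁₃₄ t₁₄₅}`. -/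
theorem g3_conjugate_by_g1_power (G : Type*) [Group G] (g1 g2 g3 g4 g5 : G)
    (t123 t124 t125 t134 t135 t145 t234 t235 t245 t345 : ℤ)
    (h21 : g2⁻¹ * g1⁻¹ * g2 * g1 = g3 ^ t123 * g4 ^ t124 * g5 ^ t125)
    (h31 : g3⁻¹ * g1⁻¹ * g3 * g1 = g4 ^ t134 * g5 ^ t135)
    (h32 : g3⁻¹ * g2⁻¹ * g3 * g2 = g4 ^ t234 * g5 ^ t235)
    (h41 : g4⁻¹ * g1⁻¹ * g4 * g1 = g5 ^ t145)
    (h42 : g4⁻¹ * g2⁻¹ * g4 * g2 = g5 ^ t245)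
    (h43 : g4⁻¹ * g3⁻¹ * g4 * g3 = g5 ^ t345)
    (h51 : g5⁻¹ * g1⁻¹ * g5 * g1 = 1)
    (h52 : g5⁻¹ * g2⁻¹ * g5 * g2 = 1)
    (h53 : g5⁻¹ * g3⁻¹ * g5 * g3 = 1)
    (h54 : g5⁻¹ * g4⁻¹ * g5 * g4 = 1) :
    ∀ y : ℤ,
      g1 ^ (-y) * g3 * g1 ^ y
        = g3 * g4 ^ (y * t134) * g5 ^ (y * t135 + s2 y * t134 * t145) := by
  have c51 : Commute g5 g1 := by
    have := congrArg (fun x => g1 * g5 * x) h51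
    simpa [Commute, SemiconjBy, mul_assoc] using this
  have c53 : Commute g5 g3 := by
    have := congrArg (fun x => g3 * g5 * x) h53
    simpa [Commute, SemiconjBy, mul_assoc] using this
  have c54 : Commute g5 g4 := by
    have := congrArg (fun x => g4 * g5 * x) h54
    simpa [Commute, SemiconjBy, mul_assoc] using this
  have k41 : g1⁻¹ * g4 * g1 = g4 * g5 ^ t145 := by
    have := congrArg (fun x => g4 * x) h41
    simpa [mul_assoc] using this
  have k31 : g1⁻¹ * g3 * g1 = g3 * (g4 ^ t134 * g5 ^ t135) := by
    have := congrArg (fun x => g3 * x) h31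
    simpa [mul_assoc] using this
  have k51 : g1⁻¹ * g5 * g1 = g5 := by
    calc g1⁻¹ * g5 * g1 = g1⁻¹ * (g5 * g1) := by group
    _ = g1⁻¹ * (g1 * g5) := by rw [c51.eq]
    _ = g5 := by group
  have k51z : ∀ a : ℤ, g1⁻¹ * g5 ^ a * g1 = g5 ^ a := by
    intro a
    have : (MulAut.conj g1⁻¹) (g5 ^ a) = ((MulAut.conj g1⁻¹) g5) ^ a := map_zpow _ _ _
    simpa [MulAut.conj_apply, mul_assoc, k51] using this
  have k41z : ∀ a : ℤ, g1⁻¹ * g4 ^ a * g1 = g4 ^ a * g5 ^ (a * t145) := by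
    intro a
    have h1 : (MulAut.conj g1⁻¹) (g4 ^ a) = ((MulAut.conj g1⁻¹) g4) ^ a := map_zpow _ _ _
    have h2 : (g4 * g5 ^ t145) ^ a = g4 ^ a * (g5 ^ t145) ^ a :=
      ((c54.zpow_left t145).symm.mul_zpow a)
    have h3 : (g5 ^ t145) ^ a = g5 ^ (a * t145) := by
      rw [← zpow_mul, mul_comm]
    simp only [MulAut.conj_apply, inv_inv] at h1
    rw [mul_assoc] at h1 ⊢
    rw [h1, k41, h2, h3]
  -- inverse-direction conjugations
  have k41' : g1 * g4 * g1⁻¹ = g4 * g5 ^ (-t145) := by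
    have e : g4 * g1 = g1 * g4 * g5 ^ t145 := by
      calc g4 * g1 = g1 * (g1⁻¹ * g4 * g1) := by group
      _ = g1 * (g4 * g5 ^ t145) := by rw [k41]
      _ = g1 * g4 * g5 ^ t145 := by group
    have e2 : g1 * g4 = g4 * g1 * g5 ^ (-t145) := by
      rw [e]; group
    calc g1 * g4 * g1⁻¹ = g4 * g1 * g5 ^ (-t145) * g1⁻¹ := by rw [e2]
    _ = g4 * (g1 * (g5 ^ (-t145) * g1⁻¹)) := by group
    _ = g4 * (g1 * (g1⁻¹ * g5 ^ (-t145))) := by rw [((c51.zpow_left (-t145)).inv_right).eq]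
    _ = g4 * g5 ^ (-t145) := by group
  have k51z' : ∀ a : ℤ, g1 * g5 ^ a * g1⁻¹ = g5 ^ a := by
    intro a
    calc g1 * g5 ^ a * g1⁻¹ = g1 * (g5 ^ a * g1⁻¹) := by group
    _ = g1 * (g1⁻¹ * g5 ^ a) := by rw [((c51.zpow_left a).inv_right).eq]
    _ = g5 ^ a := by group
  have k41z' : ∀ a : ℤ, g1 * g4 ^ a * g1⁻¹ = g4 ^ a * g5 ^ (-(a * t145)) := by
    intro a
    have h1 : (MulAut.conj g1) (g4 ^ a) = ((MulAut.conj g1) g4) ^ a := map_zpow _ _ _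
    have h2 : (g4 * g5 ^ (-t145)) ^ a = g4 ^ a * (g5 ^ (-t145)) ^ a :=
      ((c54.zpow_left (-t145)).symm.mul_zpow a)
    have h3 : (g5 ^ (-t145)) ^ a = g5 ^ (-(a * t145)) := by
      rw [← zpow_mul]; congr 1; ring
    simp only [MulAut.conj_apply] at h1
    rw [mul_assoc] at h1 ⊢
    rw [h1, k41', h2, h3]
  have k31' : g1 * g3 * g1⁻¹ = g3 * (g4 ^ (-t134) * g5 ^ (t134 * t145 - t135)) := by
    have h3' : g3 = (g1 * g3 * g1⁻¹) * (g1 * (g4 ^ t134 * g5 ^ t135) * g1⁻¹) := by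
      calc g3 = g1 * (g1⁻¹ * g3 * g1) * g1⁻¹ := by group
      _ = g1 * (g3 * (g4 ^ t134 * g5 ^ t135)) * g1⁻¹ := by rw [k31]
      _ = _ := by group
    have hu : g1 * (g4 ^ t134 * g5 ^ t135) * g1⁻¹ = g4 ^ t134 * g5 ^ (t135 - t134 * t145) := by
      calc g1 * (g4 ^ t134 * g5 ^ t135) * g1⁻¹
          = (g1 * g4 ^ t134 * g1⁻¹) * (g1 * g5 ^ t135 * g1⁻¹) := by group
      _ = g4 ^ t134 * g5 ^ (-(t134 * t145)) * g5 ^ t135 := by rw [k41z', k51z']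
      _ = g4 ^ t134 * g5 ^ (-(t134 * t145) + t135) := by rw [mul_assoc, ← zpow_add]
      _ = g4 ^ t134 * g5 ^ (t135 - t134 * t145) := by congr 1; ring
    have hstep : g1 * g3 * g1⁻¹ = g3 * (g4 ^ t134 * g5 ^ (t135 - t134 * t145))⁻¹ := by
      rw [← hu]
      exact eq_mul_inv_of_mul_eq h3'.symm
    rw [hstep, mul_inv_rev, ← zpow_neg, ← zpow_neg,
        ((c54.zpow_right (-t134)).zpow_left (-(t135 - t134 * t145))).eq]
    congr 2
    ring
  -- main induction
  intro y
  induction y using Int.induction_on with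
  | zero => simp [s2]
  | succ n ih =>
      have hsplit : g1 ^ (-(n + 1 : ℤ)) * g3 * g1 ^ ((n : ℤ) + 1)
          = g1⁻¹ * (g1 ^ (-(n : ℤ)) * g3 * g1 ^ (n : ℤ)) * g1 := by
        rw [show (-(n+1 : ℤ)) = (-(n:ℤ)) + (-1) by ring, zpow_add, zpow_add]
        group
      rw [hsplit, ih]
      have expand : g1⁻¹ * (g3 * g4 ^ ((n:ℤ) * t134) * g5 ^ ((n:ℤ) * t135 + s2 n * t134 * t145)) * g1
          = (g1⁻¹ * g3 * g1) * (g1⁻¹ * g4 ^ ((n:ℤ) * t134) * g1) *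
            (g1⁻¹ * g5 ^ ((n:ℤ) * t135 + s2 n * t134 * t145) * g1) := by group
      rw [expand, k31, k41z, k51z]
      have hcomm : g5 ^ t135 * g4 ^ ((n:ℤ) * t134) = g4 ^ ((n:ℤ) * t134) * g5 ^ t135 :=
        ((c54.zpow_right ((n:ℤ) * t134)).zpow_left t135).eq
      have e1 : g3 * (g4 ^ t134 * g5 ^ t135) * (g4 ^ ((n:ℤ)*t134) * g5 ^ ((n:ℤ)*t134*t145)) *
            g5 ^ ((n:ℤ) * t135 + s2 n * t134 * t145)
          = g3 * (g4 ^ t134 * g4 ^ ((n:ℤ)*t134)) *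
            (g5 ^ t135 * g5 ^ ((n:ℤ)*t134*t145) * g5 ^ ((n:ℤ) * t135 + s2 n * t134 * t145)) := by
        calc g3 * (g4 ^ t134 * g5 ^ t135) * (g4 ^ ((n:ℤ)*t134) * g5 ^ ((n:ℤ)*t134*t145)) *
            g5 ^ ((n:ℤ) * t135 + s2 n * t134 * t145)
            = g3 * (g4 ^ t134 * (g5 ^ t135 * g4 ^ ((n:ℤ)*t134)) * (g5 ^ ((n:ℤ)*t134*t145) *
              g5 ^ ((n:ℤ) * t135 + s2 n * t134 * t145))) := by group
        _ = g3 * (g4 ^ t134 * (g4 ^ ((n:ℤ)*t134) * g5 ^ t135) * (g5 ^ ((n:ℤ)*t134*t145) *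
              g5 ^ ((n:ℤ) * t135 + s2 n * t134 * t145))) := by rw [hcomm]
        _ = _ := by group
      rw [e1, ← zpow_add, ← zpow_add, ← zpow_add]
      have hs : s2 ((n:ℤ)+1) = s2 n + n := s2_succ n
      congr 1
      · congr 1
        ring
      · congr 1
        rw [hs]; ring
  | pred n ih =>
      have hsplit : g1 ^ (-(-(n:ℤ) - 1)) * g3 * g1 ^ (-(n:ℤ) - 1)
          = g1 * (g1 ^ (-(-(n:ℤ))) * g3 * g1 ^ (-(n:ℤ))) * g1⁻¹ := by
        rw [show (-(-(n:ℤ)-1)) = (-(-(n:ℤ))) + 1 by ring,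
            show (-(n:ℤ)-1) = (-(n:ℤ)) + (-1) by ring, zpow_add, zpow_add]
        group
      rw [hsplit, ih]
      set a := (-(n:ℤ)) * t134 with ha
      set b := (-(n:ℤ)) * t135 + s2 (-(n:ℤ)) * t134 * t145 with hb
      have expand : g1 * (g3 * g4 ^ a * g5 ^ b) * g1⁻¹
          = (g1 * g3 * g1⁻¹) * (g1 * g4 ^ a * g1⁻¹) * (g1 * g5 ^ b * g1⁻¹) := by group
      rw [expand, k31', k41z', k51z']
      have hcomm : g5 ^ (t134 * t145 - t135) * g4 ^ a = g4 ^ a * g5 ^ (t134 * t145 - t135) :=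
        ((c54.zpow_right a).zpow_left (t134 * t145 - t135)).eq
      have e1 : g3 * (g4 ^ (-t134) * g5 ^ (t134 * t145 - t135)) * (g4 ^ a * g5 ^ (-(a * t145))) * g5 ^ b
          = g3 * (g4 ^ (-t134) * g4 ^ a) *
            (g5 ^ (t134 * t145 - t135) * g5 ^ (-(a*t145)) * g5 ^ b) := by
        calc g3 * (g4 ^ (-t134) * g5 ^ (t134 * t145 - t135)) * (g4 ^ a * g5 ^ (-(a * t145))) * g5 ^ b
            = g3 * (g4 ^ (-t134) * (g5 ^ (t134 * t145 - t135) * g4 ^ a) *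
                (g5 ^ (-(a*t145)) * g5 ^ b)) := by group
        _ = g3 * (g4 ^ (-t134) * (g4 ^ a * g5 ^ (t134 * t145 - t135)) *
                (g5 ^ (-(a*t145)) * g5 ^ b)) := by rw [hcomm]
        _ = _ := by group
      rw [e1, ← zpow_add, ← zpow_add, ← zpow_add]
      have hs : s2 (-(n:ℤ) - 1) = s2 (-(n:ℤ)) - (-(n:ℤ) - 1) := s2_pred _
      congr 1
      · congr 1
        rw [ha]; ring
      · congr 1
        rw [ha, hb, hs]; ring
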